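/- arXiv:2503.00010 — 3 statements merged into one kernel-verified Lean document; each statement's English description precedes it below -/
import Mathlib

section
/- (Horseshoe-type lemma for coresolutions) Let 0 → A → B → C → 0 be a short exact sequence in an abelian category C. Suppose A and C admit exact coresolutions A → A^0 → A^1 → ⋯ and C → C^0 → C^1 → ⋯ (i.e., 0 → A → A^0 → ⋯ exact, similarly for C). If Ext^1(C, A^0) = 0 and Ext^1(K^i_C, A^i) = 0 for all i ≥ 1, where K^i_C denotes the i-th cosyzygy of C, then B admits an exact coresolution B → A^0 ⊕ C^0 → A^1 ⊕ C^1 → ⋯ fitting into a commutative diagram whose rows 0 → A^i → A^i ⊕ C^i → C^i → 0 are the split short exact sequences. -/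
open CategoryTheory CategoryTheory.Limits

universe w v u

/-- `Ext^n(X, Y) = 0` for all `n ≥ 1`. -/
def ExtOrth {C : Type u} [Category.{v} C] [Abelian C] [HasExt.{w} C] (X Y : C) : Prop :=
  ∀ n : ℕ, 1 ≤ n → Subsingleton (Abelian.Ext X Y n)

/-- `0 ⟶ X ⟶ Y ⟶ Z ⟶ 0` is a short exact sequence. -/
def IsShortExactSeq {C : Type u} [Category.{v} C] [Abelian C] {X Y Z : C}
    (f : X ⟶ Y) (g : Y ⟶ Z) : Prop :=
  ∃ w : f ≫ g = 0, (ShortComplex.mk f g w).ShortExact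

/-- The right perpendicular category `T^⊥ = {X | Ext^n(T, X) = 0, n ≥ 1, T ∈ T}`. -/
def rightPerp {C : Type u} [Category.{v} C] [Abelian C] [HasExt.{w} C] (T : Set C) : Set C :=
  {X | ∀ t ∈ T, ExtOrth t X}

/-- The left perpendicular category `^⊥T = {X | Ext^n(X, T) = 0, n ≥ 1, T ∈ T}`. -/
def leftPerp {C : Type u} [Category.{v} C] [Abelian C] [HasExt.{w} C] (T : Set C) : Set C :=
  {X | ∀ t ∈ T, ExtOrth X t}

/-- `N` admits an exact coresolution `0 → N → T⁰ → T¹ → ⋯` with all terms in `T` and all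
cosyzygies (cokernels) in `P`, encoded as chained short exact sequences
`0 → K i → T i → K (i+1) → 0` with `K 0 = N`. -/
def HasCoresolution {C : Type u} [Category.{v} C] [Abelian C] (T P : Set C) (N : C) : Prop :=
  ∃ (K : ℕ → C) (Tt : ℕ → C) (f : ∀ i, K i ⟶ Tt i) (g : ∀ i, Tt i ⟶ K (i + 1)),
    K 0 = N ∧ (∀ i, Tt i ∈ T) ∧ (∀ i, K (i + 1) ∈ P) ∧ ∀ i, IsShortExactSeq (f i) (g i)

/-- `M` admits an exact resolution `⋯ → T₁ → T₀ → M → 0` with all terms in `T` and all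
syzygies (kernels) in `P`, encoded as chained short exact sequences
`0 → K (i+1) → T i → K i → 0` with `K 0 = M`. -/
def HasResolution {C : Type u} [Category.{v} C] [Abelian C] (T P : Set C) (M : C) : Prop :=
  ∃ (K : ℕ → C) (Tt : ℕ → C) (f : ∀ i, K (i + 1) ⟶ Tt i) (g : ∀ i, Tt i ⟶ K i),
    K 0 = M ∧ (∀ i, Tt i ∈ T) ∧ (∀ i, K (i + 1) ∈ P) ∧ ∀ i, IsShortExactSeq (f i) (g i)

/-- The category `X_T` of objects `N` with an exact `T`-coresolution with
`N` and all cosyzygies in `^⊥T`. -/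
def XTCat {C : Type u} [Category.{v} C] [Abelian C] [HasExt.{w} C] (T : Set C) : Set C :=
  {N | N ∈ leftPerp T ∧ HasCoresolution T (leftPerp T) N}

/-- The category `_T X` of objects `M` with an exact `T`-resolution with
`M` and all syzygies in `T^⊥`. -/
def TXCat {C : Type u} [Category.{v} C] [Abelian C] [HasExt.{w} C] (T : Set C) : Set C :=
  {M | M ∈ rightPerp T ∧ HasResolution T (rightPerp T) M}

/-- `T` is Wakamatsu-tilting: it is self-orthogonal and every projective object admits
an exact `T`-coresolution with all cosyzygies in `^⊥T`. -/
def IsWakamatsuTilting {C : Type u} [Category.{v} C] [Abelian C] [HasExt.{w} C]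
    (T : Set C) : Prop :=
  (∀ t ∈ T, ∀ t' ∈ T, ExtOrth t t') ∧
    ∀ P : C, Projective P → HasCoresolution T (leftPerp T) P

/-! ### Auxiliary constructions -/

namespace WakamatsuAux

open CategoryTheory.Abelian DerivedCategory ZeroObject

universe w'

variable {C : Type u} [Category.{v} C] [Abelian C]

section ToHom

variable [HasExt.{w} C] [HasDerivedCategory.{w'} C]

/-- The composition `singleFunctor ⋙ homologyFunctor` is isomorphic to the identity. -/
noncomputable def singleCompHomologyIso :
    DerivedCategory.singleFunctor C 0 ⋙ DerivedCategory.homologyFunctor C 0 ≅ 𝟭 C :=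
  Functor.isoWhiskerRight ((SingleFunctors.evaluation _ _ (0 : ℤ)).mapIso
      (DerivedCategory.singleFunctorsPostcompQIso C)) _ ≪≫
    Functor.associator _ _ _ ≪≫
    Functor.isoWhiskerLeft _ (DerivedCategory.homologyFunctorFactors C 0) ≪≫
    HomologicalComplex.homologyFunctorSingleIso C (ComplexShape.up ℤ) 0

/-- A retraction of `Ext.mk₀ : (X ⟶ Y) → Ext X Y 0`. -/
noncomputable def toHom {X Y : C} (e : Ext X Y 0) : X ⟶ Y :=
  (singleCompHomologyIso (C := C)).inv.app X ≫
    (DerivedCategory.homologyFunctor C 0).map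
      (e.hom ≫ (shiftFunctorZero' (DerivedCategory C) ((0 : ℕ) : ℤ) (by simp)).hom.app
        ((DerivedCategory.singleFunctor C 0).obj Y)) ≫
    (singleCompHomologyIso (C := C)).hom.app Y

lemma toHom_mk₀ {X Y : C} (u : X ⟶ Y) : toHom (Ext.mk₀ u) = u := by
  dsimp [toHom]
  rw [Ext.mk₀_hom]
  dsimp [ShiftedHom.mk₀]
  simp only [Category.assoc, Iso.inv_hom_id_app, Functor.id_obj, Category.comp_id]
  have h := (singleCompHomologyIso (C := C)).hom.naturality u
  dsimp at h
  rw [h, Iso.inv_hom_id_app_assoc]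

lemma toHom_mk₀_comp {X Y Z : C} (f : X ⟶ Y) (e : Ext Y Z 0) :
    toHom ((Ext.mk₀ f).comp e (zero_add 0)) = f ≫ toHom e := by
  dsimp [toHom]
  rw [Ext.comp_hom, Ext.mk₀_hom, ShiftedHom.mk₀_comp, Category.assoc, Functor.map_comp]
  have h := (singleCompHomologyIso (C := C)).inv.naturality f
  dsimp at h
  simp only [Category.assoc]
  rw [← reassoc_of% h]

end ToHom

section Lift

variable [HasExt.{w} C]

/-- Lifting along a mono with `Ext¹`-vanishing. -/
lemma exists_lift {A B Z T : C} {f : A ⟶ B} {g : B ⟶ Z} {w : f ≫ g = 0}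
    (hS : (ShortComplex.mk f g w).ShortExact) (u : A ⟶ T)
    (hext : Subsingleton (Ext Z T 1)) : ∃ v : B ⟶ T, f ≫ v = u := by
  letI := HasDerivedCategory.standard C
  obtain ⟨x₂, hx₂⟩ := Ext.contravariant_sequence_exact₁ hS T (Ext.mk₀ u) rfl
    (hext.elim _ _)
  exact ⟨toHom x₂, by rw [← toHom_mk₀_comp, hx₂, toHom_mk₀]⟩

end Lift

section Step

variable [HasExt.{w} C]

/-- The data at stage `i` of the construction: a short exact sequence
`0 ⟶ KAi ⟶ Bi ⟶ KCi ⟶ 0`. -/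
structure State (KAi KCi : C) where
  Bi : C
  xi : KAi ⟶ Bi
  yi : Bi ⟶ KCi
  ses : IsShortExactSeq xi yi

/-- The data produced by one step of the horseshoe construction. -/
structure StepData {KAi KCi TAi TCi KAs KCs : C} (fa : KAi ⟶ TAi) (ga : TAi ⟶ KAs)
    (fc : KCi ⟶ TCi) (gc : TCi ⟶ KCs) (s : State KAi KCi) where
  next : State KAs KCs
  fB : s.Bi ⟶ TAi ⊞ TCi
  gB : TAi ⊞ TCi ⟶ next.Bi
  sesB : IsShortExactSeq fB gB
  sq1 : fa ≫ biprod.inl = s.xi ≫ fB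
  sq2 : fB ≫ biprod.snd = s.yi ≫ fc
  sq3 : ga ≫ next.xi = biprod.inl ≫ gB
  sq4 : gB ≫ next.yi = biprod.snd ≫ gc

lemma step_nonempty {KAi KCi TAi TCi KAs KCs : C}
    {fa : KAi ⟶ TAi} {ga : TAi ⟶ KAs} {fc : KCi ⟶ TCi} {gc : TCi ⟶ KCs}
    (hA : IsShortExactSeq fa ga) (hC : IsShortExactSeq fc gc)
    (s : State KAi KCi) (hext : Subsingleton (Abelian.Ext KCi TAi 1)) :
    Nonempty (StepData fa ga fc gc s) := by
  obtain ⟨B', f, g, wfg, hS⟩ := s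
  obtain ⟨wa, hSA⟩ := hA
  obtain ⟨wc, hSC⟩ := hC
  haveI := hSA.mono_f
  haveI := hSA.epi_g
  haveI := hSC.mono_f
  haveI := hSC.epi_g
  haveI := hS.mono_f
  haveI := hS.epi_g
  obtain ⟨a, ha⟩ := exists_lift hS fa hext
  set t : B' ⟶ TAi ⊞ TCi := biprod.lift a (g ≫ fc) with ht_def
  have hft : f ≫ t = fa ≫ biprod.inl := by
    apply biprod.hom_ext
    · simp [ht_def, ha]
    · simp [ht_def, reassoc_of% wfg]
  haveI ht : Mono t := by
    rw [Preadditive.mono_iff_cancel_zero]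
    intro P k hk
    have h1 : k ≫ g = 0 := by
      have h2 : k ≫ t ≫ biprod.snd = 0 := by rw [← Category.assoc, hk, zero_comp]
      rw [ht_def, biprod.lift_snd, ← Category.assoc] at h2
      rw [← cancel_mono fc, zero_comp]
      exact h2
    obtain ⟨l, hl⟩ := KernelFork.IsLimit.lift' hS.fIsKernel k h1
    dsimp at hl
    have h2 : l ≫ fa = 0 := by
      have h3 : k ≫ t ≫ biprod.fst = 0 := by rw [← Category.assoc, hk, zero_comp]
      rw [ht_def, biprod.lift_fst] at h3
      rw [← ha, ← Category.assoc, hl]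
      exact h3
    have l0 : l = 0 := by
      rw [← cancel_mono fa, h2, zero_comp]
    rw [← hl, l0, zero_comp]
  have hfainl : fa ≫ biprod.inl ≫ cokernel.π t = 0 := by
    rw [← Category.assoc, ← hft, Category.assoc, cokernel.condition, comp_zero]
  obtain ⟨u, hu⟩ := CokernelCofork.IsColimit.desc' hSA.gIsCokernel
    (biprod.inl ≫ cokernel.π t) hfainl
  dsimp at hu
  have hvcond : t ≫ biprod.snd ≫ gc = 0 := by
    rw [← Category.assoc, ht_def, biprod.lift_snd, Category.assoc, wc, comp_zero]
  set v : cokernel t ⟶ KCs := cokernel.desc t (biprod.snd ≫ gc) hvcond with hv_def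
  have hπv : cokernel.π t ≫ v = biprod.snd ≫ gc := by
    rw [hv_def, cokernel.π_desc]
  have huv : u ≫ v = 0 := by
    rw [← cancel_epi ga, ← Category.assoc, hu, Category.assoc, hπv, comp_zero,
      ← Category.assoc, biprod.inl_snd, zero_comp]
  let S : ShortComplex.SnakeInput C :=
    { L₀ := ShortComplex.mk (0 : (0 : C) ⟶ (0 : C)) (0 : (0 : C) ⟶ (0 : C)) (by simp)
      L₁ := ShortComplex.mk f g wfg
      L₂ := ShortComplex.mk (biprod.inl : TAi ⟶ TAi ⊞ TCi) (biprod.snd : _ ⟶ TCi) (by simp)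
      L₃ := ShortComplex.mk u v huv
      v₀₁ := 0
      v₁₂ :=
        { τ₁ := fa
          τ₂ := t
          τ₃ := fc
          comm₁₂ := hft.symm
          comm₂₃ := by simp [ht_def] }
      v₂₃ :=
        { τ₁ := ga
          τ₂ := cokernel.π t
          τ₃ := gc
          comm₁₂ := hu
          comm₂₃ := hπv }
      w₀₂ := zero_comp
      w₁₃ := by
        ext
        · exact wa
        · exact cokernel.condition t
        · exact wc
      h₀ := by
        apply ShortComplex.isLimitOfIsLimitπ
        all_goals
          refine (KernelFork.isLimitMapConeEquiv _ _).symm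
            (KernelFork.IsLimit.ofMonoOfIsZero _ ?_ (isZero_zero C))
        · exact (inferInstance : Mono fa)
        · exact ht
        · exact (inferInstance : Mono fc)
      h₃ := by
        apply ShortComplex.isColimitOfIsColimitπ
        · exact (CokernelCofork.isColimitMapCoconeEquiv _ _).symm hSA.gIsCokernel
        · exact (CokernelCofork.isColimitMapCoconeEquiv _ _).symm (cokernelIsCokernel t)
        · exact (CokernelCofork.isColimitMapCoconeEquiv _ _).symm hSC.gIsCokernel
      L₁_exact := hS.exact
      epi_L₁_g := (inferInstance : Epi g)
      L₂_exact := (ShortComplex.Splitting.ofHasBinaryBiproduct TAi TCi).exact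
      mono_L₂_f := (inferInstance : Mono (biprod.inl : TAi ⟶ TAi ⊞ TCi)) }
  have hδ : S.δ = 0 := (isZero_zero C).eq_of_src S.δ 0
  haveI hmono_u : Mono u := S.L₂'_exact.mono_g hδ
  haveI hepi_v : Epi v := S.epi_L₃_g
  have hL₃ : (ShortComplex.mk u v huv).ShortExact :=
    { exact := S.L₃_exact
      mono_f := hmono_u
      epi_g := hepi_v }
  exact ⟨{
    next :=
      { Bi := cokernel t
        xi := u
        yi := v
        ses := ⟨huv, hL₃⟩ }
    fB := t
    gB := cokernel.π t
    sesB := ⟨cokernel.condition t,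
      { exact := ShortComplex.exact_of_g_is_cokernel _ (cokernelIsCokernel t)
        mono_f := ht
        epi_g := inferInstance }⟩
    sq1 := hft.symm
    sq2 := by simp [ht_def]
    sq3 := hu
    sq4 := hπv }⟩

end Step

end WakamatsuAux

open WakamatsuAux in
theorem stmt4 {C : Type u} [Category.{v} C] [Abelian C] [HasExt.{w} C]
    (KA TA : ℕ → C) (fA : ∀ i, KA i ⟶ TA i) (gA : ∀ i, TA i ⟶ KA (i + 1))
    (hA : ∀ i, IsShortExactSeq (fA i) (gA i))
    (KC TC : ℕ → C) (fC : ∀ i, KC i ⟶ TC i) (gC : ∀ i, TC i ⟶ KC (i + 1))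
    (hC : ∀ i, IsShortExactSeq (fC i) (gC i))
    (B : C) (x : KA 0 ⟶ B) (y : B ⟶ KC 0) (hxy : IsShortExactSeq x y)
    (h0 : Subsingleton (Abelian.Ext (KC 0) (TA 0) 1))
    (hi : ∀ i : ℕ, 1 ≤ i → Subsingleton (Abelian.Ext (KC i) (TA i) 1)) :
    ∃ (KB : ℕ → C) (fB : ∀ i, KB i ⟶ TA i ⊞ TC i) (gB : ∀ i, TA i ⊞ TC i ⟶ KB (i + 1))
      (p : ∀ i, KA i ⟶ KB i) (q : ∀ i, KB i ⟶ KC i) (e : KB 0 ≅ B),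
      (∀ i, IsShortExactSeq (fB i) (gB i)) ∧
      (∀ i, IsShortExactSeq (p i) (q i)) ∧
      p 0 ≫ e.hom = x ∧ e.hom ≫ y = q 0 ∧
      (∀ i, fA i ≫ biprod.inl = p i ≫ fB i) ∧
      (∀ i, fB i ≫ biprod.snd = q i ≫ fC i) ∧
      (∀ i, gA i ≫ p (i + 1) = biprod.inl ≫ gB i) ∧
      (∀ i, gB i ≫ q (i + 1) = biprod.snd ≫ gC i) := by
  have ext1 : ∀ i, Subsingleton (Abelian.Ext (KC i) (TA i) 1) := fun i =>
    Nat.casesOn i h0 (fun j => hi (j + 1) (by omega))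
  let st : ∀ i, State (KA i) (KC i) := fun i =>
    Nat.rec ⟨B, x, y, hxy⟩
      (fun i s => (Classical.choice (step_nonempty (hA i) (hC i) s (ext1 i))).next) i
  let D : ∀ i, StepData (fA i) (gA i) (fC i) (gC i) (st i) := fun i =>
    Classical.choice (step_nonempty (hA i) (hC i) (st i) (ext1 i))
  refine ⟨fun i => (st i).Bi, fun i => (D i).fB, fun i => (D i).gB,
    fun i => (st i).xi, fun i => (st i).yi, Iso.refl B,
    fun i => (D i).sesB, fun i => (st i).ses, Category.comp_id x,
    Category.id_comp y, fun i => (D i).sq1, fun i => (D i).sq2,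
    fun i => (D i).sq3, fun i => (D i).sq4⟩
end

section
/- In a recollement (A, B, C) of abelian categories, if i^* is exact then i^! j_! = 0, and if i^! is exact then i^* j_* = 0. -/
open CategoryTheory CategoryTheory.Limits

universe w₁ w₂ w₃ v₁ v₂ v₃ u₁ u₂ u₃

/-- A recollement of abelian categories `(A, B, C)`. -/
structure AbRecollement (A : Type u₁) (B : Type u₂) (C : Type u₃)
    [Category.{v₁} A] [Category.{v₂} B] [Category.{v₃} C]
    [Abelian A] [Abelian B] [Abelian C] where
  /-- `i_* : A ⥤ B` -/
  iStar : A ⥤ B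
  /-- `i^* : B ⥤ A` -/
  iUp : B ⥤ A
  /-- `i^! : B ⥤ A` -/
  iShriek : B ⥤ A
  /-- `j^* : B ⥤ C` -/
  jUp : B ⥤ C
  /-- `j_! : C ⥤ B` -/
  jLow : C ⥤ B
  /-- `j_* : C ⥤ B` -/
  jStar : C ⥤ B
  adj₁ : iUp ⊣ iStar
  adj₂ : iStar ⊣ iShriek
  adj₃ : jLow ⊣ jUp
  adj₄ : jUp ⊣ jStar
  iStar_lexact : PreservesFiniteLimits iStar
  iStar_rexact : PreservesFiniteColimits iStar
  jUp_lexact : PreservesFiniteLimits jUp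
  jUp_rexact : PreservesFiniteColimits jUp
  iUp_rexact : PreservesFiniteColimits iUp
  jLow_rexact : PreservesFiniteColimits jLow
  iShriek_lexact : PreservesFiniteLimits iShriek
  jStar_lexact : PreservesFiniteLimits jStar
  iStar_full : iStar.Full
  iStar_faithful : iStar.Faithful
  jLow_full : jLow.Full
  jLow_faithful : jLow.Faithful
  jStar_full : jStar.Full
  jStar_faithful : jStar.Faithful
  /-- `Im i_* = Ker j^*` -/
  im_eq_ker : ∀ X : B, (∃ Y : A, Nonempty (iStar.obj Y ≅ X)) ↔ Limits.IsZero (jUp.obj X)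
  /-- the exact sequence `0 → i_* i^! X → X → j_* j^* X` given by the adjunctions -/
  seq₁ : ∀ X : B, ∃ w : adj₂.counit.app X ≫ adj₄.unit.app X = 0,
    Mono (adj₂.counit.app X) ∧
      (ShortComplex.mk (adj₂.counit.app X) (adj₄.unit.app X) w).Exact
  /-- the exact sequence `j_! j^* X → X → i_* i^* X → 0` given by the adjunctions -/
  seq₂ : ∀ X : B, ∃ w : adj₃.counit.app X ≫ adj₁.unit.app X = 0,
    Epi (adj₁.unit.app X) ∧
      (ShortComplex.mk (adj₃.counit.app X) (adj₁.unit.app X) w).Exact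

variable {A : Type u₁} {B : Type u₂} {C : Type u₃}
  [Category.{v₁} A] [Category.{v₂} B] [Category.{v₃} C]
  [Abelian A] [Abelian B] [Abelian C]

theorem stmt11 (R : AbRecollement A B C) :
    (PreservesFiniteLimits R.iUp →
      ∀ X : C, Limits.IsZero (R.iShriek.obj (R.jLow.obj X))) ∧
    (PreservesFiniteColimits R.iShriek →
      ∀ X : C, Limits.IsZero (R.iUp.obj (R.jStar.obj X))) := by
  haveI := R.iStar_full
  haveI := R.iStar_faithful
  -- `i^* j_! = 0`
  have hA : ∀ X : C, IsZero (R.iUp.obj (R.jLow.obj X)) := by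
    intro X
    rw [IsZero.iff_id_eq_zero]
    apply (R.adj₁.homEquiv _ _).injective
    apply (R.adj₃.homEquiv _ _).injective
    exact ((R.im_eq_ker _).mp ⟨_, ⟨Iso.refl _⟩⟩).eq_of_tgt _ _
  -- `i^! j_* = 0`
  have hB : ∀ X : C, IsZero (R.iShriek.obj (R.jStar.obj X)) := by
    intro X
    rw [IsZero.iff_id_eq_zero]
    apply (R.adj₂.homEquiv _ _).symm.injective
    apply (R.adj₄.homEquiv _ _).symm.injective
    exact ((R.im_eq_ker _).mp ⟨_, ⟨Iso.refl _⟩⟩).eq_of_src _ _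
  constructor
  · intro hExact X
    obtain ⟨w, hm, -⟩ := R.seq₁ (R.jLow.obj X)
    haveI : Mono (R.adj₂.counit.app (R.jLow.obj X)) := hm
    haveI : Mono (R.iUp.map (R.adj₂.counit.app (R.jLow.obj X))) :=
      R.iUp.map_mono _
    have h0 : IsZero (R.iUp.obj (R.iStar.obj (R.iShriek.obj (R.jLow.obj X)))) :=
      (hA X).of_mono (R.iUp.map (R.adj₂.counit.app (R.jLow.obj X)))
    exact h0.of_iso (asIso (R.adj₁.counit.app (R.iShriek.obj (R.jLow.obj X)))).symm
  · intro hExact X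
    obtain ⟨w, he, -⟩ := R.seq₂ (R.jStar.obj X)
    haveI : Epi (R.adj₁.unit.app (R.jStar.obj X)) := he
    haveI : Epi (R.iShriek.map (R.adj₁.unit.app (R.jStar.obj X))) :=
      R.iShriek.map_epi _
    have h0 : IsZero (R.iShriek.obj (R.iStar.obj (R.iUp.obj (R.jStar.obj X)))) :=
      (hB X).of_epi (R.iShriek.map (R.adj₁.unit.app (R.jStar.obj X)))
    exact h0.of_iso (asIso (R.adj₂.unit.app (R.iUp.obj (R.jStar.obj X))))
end

section
/- Let C be an abelian category with enough projectives and injectives and T a Wakamatsu-tilting subcategory. Then T = ^⊥(_T X) ∩ _T X, where _T X is the category of objects M admitting an exact T-resolution with all syzygies in T^⊥; i.e., T consists exactly of the objects of _T X that are Ext-orthogonal to all of _T X from the left. -/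
open CategoryTheory CategoryTheory.Limits

universe w v u

section Aux

open CategoryTheory.Abelian

/-- From an element of `Ext X Y 0` which composes with `g : Y ⟶ X` to the identity,
produce an actual section of `g` in the category. -/
lemma aux_ext_zero_section {C : Type u} [Category.{v} C] [Abelian C] [HasExt.{w} C]
    {X Y : C} (g : Y ⟶ X) (x : Abelian.Ext X Y 0)
    (hx : x.comp (Ext.mk₀ g) (add_zero 0) = Ext.mk₀ (𝟙 X)) :
    ∃ s : X ⟶ Y, s ≫ g = 𝟙 X := by
  letI := HasDerivedCategory.standard C
  -- the natural isomorphism `singleFunctor C 0 ⋙ homologyFunctor C 0 ≅ 𝟭 C`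
  let e1 : DerivedCategory.singleFunctor C 0 ≅
      CochainComplex.singleFunctor C 0 ⋙ DerivedCategory.Q :=
    { hom := (DerivedCategory.singleFunctorsPostcompQIso C).hom.hom 0
      inv := (DerivedCategory.singleFunctorsPostcompQIso C).inv.hom 0
      hom_inv_id := by
        ext Z
        exact SingleFunctors.hom_inv_id_hom_app (DerivedCategory.singleFunctorsPostcompQIso C) 0 Z
      inv_hom_id := by
        ext Z
        exact SingleFunctors.inv_hom_id_hom_app
          (DerivedCategory.singleFunctorsPostcompQIso C) 0 Z }
  let ι : DerivedCategory.singleFunctor C 0 ⋙ DerivedCategory.homologyFunctor C 0 ≅ 𝟭 C :=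
    Functor.isoWhiskerRight e1 (DerivedCategory.homologyFunctor C 0) ≪≫
      Functor.associator _ _ _ ≪≫
      Functor.isoWhiskerLeft (CochainComplex.singleFunctor C 0)
        (DerivedCategory.homologyFunctorFactors C 0) ≪≫
      HomologicalComplex.homologyFunctorSingleIso C (ComplexShape.up ℤ) 0
  set F := DerivedCategory.singleFunctor C 0 with hF
  set H := DerivedCategory.homologyFunctor C 0 with hH
  -- extract the morphism in the derived category
  have h1 : x.hom.comp (Ext.mk₀ g).hom (by omega) = (Ext.mk₀ (𝟙 X)).hom := by
    rw [← Ext.comp_hom, hx]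
    simp
  rw [Ext.mk₀_hom, Ext.mk₀_hom] at h1
  obtain ⟨r', hr'⟩ : ∃ r' : F.obj X ⟶ F.obj Y,
      x.hom = ShiftedHom.mk₀ ((0 : ℕ) : ℤ) (by simp) r' := by
    refine ⟨(ShiftedHom.homEquiv ((0 : ℕ) : ℤ) (by simp)).symm x.hom, ?_⟩
    have := (ShiftedHom.homEquiv (C := DerivedCategory C) (X := F.obj X) (Y := F.obj Y)
      ((0 : ℕ) : ℤ) (by simp)).apply_symm_apply x.hom
    rw [ShiftedHom.homEquiv_apply] at this
    exact this.symm
  rw [hr', ShiftedHom.mk₀_comp_mk₀] at h1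
  have h2 : r' ≫ F.map g = 𝟙 (F.obj X) := by
    have hinj := (ShiftedHom.homEquiv (C := DerivedCategory C) (X := F.obj X) (Y := F.obj X)
      ((0 : ℕ) : ℤ) (by simp)).injective
    have : r' ≫ F.map g = F.map (𝟙 X) := by
      apply hinj
      rw [ShiftedHom.homEquiv_apply, ShiftedHom.homEquiv_apply]
      exact h1
    rw [this, F.map_id]
  refine ⟨ι.inv.app X ≫ H.map r' ≫ ι.hom.app Y, ?_⟩
  have hnat : H.map (F.map g) ≫ ι.hom.app X = ι.hom.app Y ≫ g := ι.hom.naturality g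
  calc (ι.inv.app X ≫ H.map r' ≫ ι.hom.app Y) ≫ g
      = ι.inv.app X ≫ H.map r' ≫ H.map (F.map g) ≫ ι.hom.app X := by
        simp only [Category.assoc, hnat]
    _ = ι.inv.app X ≫ H.map (r' ≫ F.map g) ≫ ι.hom.app X := by rw [H.map_comp, Category.assoc]
    _ = ι.inv.app X ≫ ι.hom.app X := by rw [h2, H.map_id]; simp
    _ = 𝟙 X := ι.inv_hom_id_app X

end Aux

theorem stmt16 {C : Type u} [Category.{v} C] [Abelian C] [HasExt.{w} C]
    [EnoughProjectives C] [EnoughInjectives C]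
    (T : Set C)
    (hadd : ∀ X ∈ T, ∀ Y ∈ T, (X ⊞ Y) ∈ T)
    (hsum : ∀ X ∈ T, ∀ Y : C, (∃ (s : Y ⟶ X) (r : X ⟶ Y), s ≫ r = 𝟙 Y) → Y ∈ T)
    (horth : ∀ t ∈ T, ∀ t' ∈ T, ExtOrth t t')
    (hproj : ∀ P : C, Projective P → HasCoresolution T (leftPerp T) P) :
    T = leftPerp (TXCat T) ∩ TXCat T := by
  apply le_antisymm
  · -- `T ⊆ leftPerp (TXCat T) ∩ TXCat T`
    intro t ht
    constructor
    · -- `t ∈ leftPerp (TXCat T)`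
      intro m hm
      exact hm.1 t ht
    · -- `t ∈ TXCat T`
      refine ⟨fun t' ht' => horth t' ht' t ht, ?_⟩
      -- trivial resolution `0 → t → t ⊞ t → t → 0` repeated
      refine ⟨fun _ => t, fun _ => t ⊞ t, fun _ => biprod.inl, fun _ => biprod.snd,
        rfl, fun _ => hadd t ht t ht, fun _ t' ht' => horth t' ht' t ht, fun i => ?_⟩
      refine ⟨by simp, ?_⟩
      exact ShortComplex.Splitting.shortExact
        { r := biprod.fst
          s := biprod.inr
          f_r := by simp
          s_g := by simp
          id := by simp [biprod.total] }
  · -- `leftPerp (TXCat T) ∩ TXCat T ⊆ T`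
    rintro M ⟨hMl, hMr, K, Tt, f, g, hK0, hTt, hKmem, hses⟩
    subst hK0
    -- the first syzygy `K 1` belongs to `TXCat T`
    have hK1 : K 1 ∈ TXCat T := by
      refine ⟨hKmem 0, fun i => K (i + 1), fun i => Tt (i + 1), fun i => f (i + 1),
        fun i => g (i + 1), rfl, fun i => hTt (i + 1), fun i => hKmem (i + 1),
        fun i => hses (i + 1)⟩
    obtain ⟨w, hS⟩ := hses 0
    -- `Ext¹(K 0, K 1) = 0` since `K 0 ∈ leftPerp (TXCat T)`
    have hsub : Subsingleton (Abelian.Ext (K 0) (K 1) 1) := hMl (K 1) hK1 1 le_rfl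
    -- lift the identity of `K 0` along `g 0` up to `Ext⁰`
    have hzero : (Abelian.Ext.mk₀ (𝟙 (K 0))).comp hS.extClass rfl = 0 :=
      Subsingleton.elim _ _
    obtain ⟨x₂, hx₂⟩ :=
      Abelian.Ext.covariant_sequence_exact₃ (K 0) hS (Abelian.Ext.mk₀ (𝟙 (K 0))) rfl hzero
    obtain ⟨s, hs⟩ := aux_ext_zero_section (g 0) x₂ hx₂
    exact hsum (Tt 0) (hTt 0) (K 0) ⟨s, g 0, hs⟩
end
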